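/- Let α, θ be real with sinα ≠ 0, and let g₀(z,ζ) = log |(conj(z)·ζ·sin(α-θ) + conj(z)·sinθ + ζ·sinθ - sin(α+θ)) / ((z-ζ)·sinα)|². Then for z, ζ complex with |z|²·sin(α-θ) + z·sinθ + conj(z)·sinθ - sin(α+θ) = 0 (z on the boundary circle) and z ≠ ζ, g₀(z,ζ) = 0. -/

import Mathlib

theorem stmt13 (α θ : ℝ) (hα : Real.sin α ≠ 0) (z ζ : ℂ) (hzζ : z ≠ ζ)
    (hz : (Complex.normSq z : ℂ) * (Real.sin (α - θ) : ℂ) + z * (Real.sin θ : ℂ) +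
          (starRingEnd ℂ) z * (Real.sin θ : ℂ) - (Real.sin (α + θ) : ℂ) = 0) :
    Real.log (‖
      (((starRingEnd ℂ) z * ζ * (Real.sin (α - θ) : ℂ) + (starRingEnd ℂ) z * (Real.sin θ : ℂ) +
          ζ * (Real.sin θ : ℂ) - (Real.sin (α + θ) : ℂ)) /
        ((z - ζ) * (Real.sin α : ℂ)))‖ ^ 2) = 0 := by
  set a : ℂ := (Real.sin (α - θ) : ℂ) with ha
  set t : ℂ := (Real.sin θ : ℂ) with ht
  set w : ℂ := (starRingEnd ℂ) z * a + t with hw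
  have hnormSq : (Complex.normSq z : ℂ) = z * (starRingEnd ℂ) z := (Complex.mul_conj z).symm
  have hnum : (starRingEnd ℂ) z * ζ * a + (starRingEnd ℂ) z * t + ζ * t
      - (Real.sin (α + θ) : ℂ) = (ζ - z) * w := by
    rw [hw]
    linear_combination hz - a * hnormSq
  have trig : Real.sin (α + θ) * Real.sin (α - θ) = Real.sin α ^ 2 - Real.sin θ ^ 2 := by
    rw [Real.sin_add, Real.sin_sub]
    nlinarith [Real.sin_sq_add_cos_sq α, Real.sin_sq_add_cos_sq θ]
  have hconjw : (starRingEnd ℂ) w = z * a + t := by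
    rw [hw, ha, ht, map_add, map_mul, Complex.conj_conj, Complex.conj_ofReal, Complex.conj_ofReal]
  have hww : w * (starRingEnd ℂ) w = ((Real.sin α ^ 2 : ℝ) : ℂ) := by
    rw [hconjw]
    have trig' : ((Real.sin (α + θ) : ℂ)) * a = ((Real.sin α : ℂ))^2 - t^2 := by
      rw [ha, ht, ← Complex.ofReal_pow, ← Complex.ofReal_pow, ← Complex.ofReal_sub,
        ← Complex.ofReal_mul]; exact_mod_cast congrArg (Complex.ofReal) trig
    rw [Complex.ofReal_pow]
    linear_combination a * hz - a^2 * hnormSq + trig'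
  have habsw : ‖w‖ = |Real.sin α| := by
    have h1 : (Complex.normSq w : ℂ) = ((Real.sin α ^ 2 : ℝ) : ℂ) := by
      rw [← Complex.mul_conj w]; exact hww
    have h2 : Complex.normSq w = Real.sin α ^ 2 := by exact_mod_cast h1
    have := Complex.sq_norm w
    nlinarith [norm_nonneg w, abs_nonneg (Real.sin α), sq_abs (Real.sin α)]
  have habs : ‖(((starRingEnd ℂ) z * ζ * a + (starRingEnd ℂ) z * t + ζ * t
      - (Real.sin (α + θ) : ℂ)) / ((z - ζ) * (Real.sin α : ℂ)))‖ = 1 := by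
    rw [hnum, norm_div, norm_mul, norm_mul, habsw]
    have h1 : ‖ζ - z‖ = ‖z - ζ‖ := by
      exact norm_sub_rev ζ z
    rw [h1, Complex.norm_real, Real.norm_eq_abs]
    have h2 : ‖z - ζ‖ ≠ 0 := by
      simpa [sub_eq_zero] using hzζ
    have h3 : |Real.sin α| ≠ 0 := abs_ne_zero.mpr hα
    field_simp
  rw [habs]
  simp
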